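/- arXiv:2512.21182 — 2 statements merged into one kernel-verified Lean document; each statement's English description precedes it below -/
import Mathlib

section
/- Let (f : C → D, g : D → C, h : C → C) be maps between chain complexes such that f and g are chain maps of degree 0, h has degree 1, fg = id_D, id_C − gf = d_C h + h d_C, h∘h = 0, f∘h = 0, and f is surjective. Then h∘g = 0. -/
/-!
STATEMENT 0: If (f : C → D, g : D → C, h : C → C) are maps between chain complexes
with f, g chain maps of degree 0, h of degree 1, f ∘ g = id_D,
id_C − g∘f = d_C h + h d_C, h∘h = 0, f∘h = 0 and f surjective, then h∘g = 0.

Chain complexes are over a commutative ring `R`, modelled as `ChainComplex (ModuleCat R) ℕ`.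
The degree-1 map `h` with `id − gf = dh + hd` is a `Homotopy (𝟙 C) (f ≫ g)`
(recall `f ≫ g` is `g ∘ f`); its degree-1 components are `h.hom i (i+1)`.
-/

open CategoryTheory

theorem statement0 {R : Type} [CommRing R] {C D : ChainComplex (ModuleCat R) ℕ}
    (f : C ⟶ D) (g : D ⟶ C) (h : Homotopy (𝟙 C) (f ≫ g))
    (hfg : g ≫ f = 𝟙 D)
    (hhh : ∀ i, h.hom i (i + 1) ≫ h.hom (i + 1) (i + 2) = 0)
    (hfh : ∀ i, h.hom i (i + 1) ≫ f.f (i + 1) = 0)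
    (hsurj : ∀ i, Function.Surjective (f.f i)) :
    ∀ i, g.f i ≫ h.hom i (i + 1) = 0 := by
  intro i
  have rel1 : (ComplexShape.down ℕ).Rel (i+1) i := rfl
  have rel2 : (ComplexShape.down ℕ).Rel (i+2) (i+1) := rfl
  -- e1 : h = h ∘ d ∘ h  at the relevant degrees
  have e1 : h.hom i (i+1) = h.hom i (i+1) ≫ C.d (i+1) i ≫ h.hom i (i+1) := by
    have c := h.comm (i+1)
    rw [dNext_eq h.hom rel1, prevD_eq h.hom rel2, HomologicalComplex.id_f] at c
    have t := congrArg (fun m => h.hom i (i+1) ≫ m) c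
    simpa only [Category.comp_id, Preadditive.comp_add, HomologicalComplex.comp_f,
      reassoc_of% hhh i, reassoc_of% hfh i, Limits.zero_comp, add_zero] using t
  -- second identity: insert 𝟙 C at degree i between g and h
  have c0 := h.comm i
  rw [HomologicalComplex.id_f] at c0
  have key : g.f i ≫ dNext i h.hom ≫ h.hom i (i+1)
      + g.f i ≫ (prevD i h.hom) ≫ h.hom i (i+1) = 0 := by
    have this1 := congrArg (fun m => g.f i ≫ m ≫ h.hom i (i+1)) c0
    simp only [Category.id_comp, Preadditive.add_comp, Preadditive.comp_add,
      HomologicalComplex.comp_f, Category.assoc] at this1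
    have hgf : g.f i ≫ f.f i ≫ g.f i ≫ h.hom i (i+1) = g.f i ≫ h.hom i (i+1) := by
      rw [← Category.assoc, ← HomologicalComplex.comp_f, hfg]
      simp
    rw [hgf] at this1
    exact add_right_cancel (this1.symm.trans (zero_add _).symm)
  -- the dNext term vanishes by hh = 0 (or because d = 0 at i = 0)
  have hdnext : g.f i ≫ dNext i h.hom ≫ h.hom i (i+1) = 0 := by
    rcases i with _ | j
    · rw [dNext_eq_zero h.hom 0 (by simp [ComplexShape.down])]
      simp
    · rw [dNext_eq h.hom (show (ComplexShape.down ℕ).Rel (j+1) j from rfl)]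
      simp only [Category.assoc, hhh j]
      simp
  rw [hdnext, zero_add, prevD_eq h.hom rel1] at key
  calc g.f i ≫ h.hom i (i+1)
      = g.f i ≫ h.hom i (i+1) ≫ C.d (i+1) i ≫ h.hom i (i+1) := by rw [← e1]
    _ = 0 := by simpa [Category.assoc] using key
end

section
/- The de Rham map evaluates to 1 on the corresponding Whitney form: for injective monotone f : [p] → [n] with associated face σ = (f(0),…,f(p)), the integral over Δ^σ of ω_f equals 1, i.e., ∫_{Δᵖ} f*ω_f = 1. -/
/-!
The polynomial de Rham algebra `(A_PL)_n` on the standard `n`-simplex: the free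
graded-commutative ℚ-algebra on generators `t₀, …, t_n` of degree 0 and
`dt₀, …, dt_n` of degree 1, modulo the relations `Σᵢ tᵢ = 1` and `Σᵢ dtᵢ = 0`.
We realize it as a `RingQuot` of the free algebra on `2(n+1)` generators by the
(graded-)commutation relations and the two sum relations.
-/

/-- Generator names: `Sum.inl i` is `tᵢ` (degree 0), `Sum.inr i` is `dtᵢ` (degree 1). -/
abbrev FA (n : ℕ) := FreeAlgebra ℚ (Fin (n + 1) ⊕ Fin (n + 1))

/-- The generator `tᵢ` in the free algebra. -/
noncomputable def tGen {n : ℕ} (i : Fin (n + 1)) : FA n := FreeAlgebra.ι ℚ (Sum.inl i)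

/-- The generator `dtᵢ` in the free algebra. -/
noncomputable def dtGen {n : ℕ} (i : Fin (n + 1)) : FA n := FreeAlgebra.ι ℚ (Sum.inr i)

/-- The defining relations of `(A_PL)_n`: the `tᵢ` are central among generators,
the `dtᵢ` anticommute (degree 1), `Σᵢ tᵢ = 1` and `Σᵢ dtᵢ = 0`. -/
inductive APLRel (n : ℕ) : FA n → FA n → Prop
  | comm_tt (i j : Fin (n + 1)) : APLRel n (tGen i * tGen j) (tGen j * tGen i)
  | comm_tdt (i j : Fin (n + 1)) : APLRel n (tGen i * dtGen j) (dtGen j * tGen i)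
  | anticomm (i j : Fin (n + 1)) : APLRel n (dtGen i * dtGen j) (-(dtGen j * dtGen i))
  | sum_t : APLRel n (∑ i, tGen i) 1
  | sum_dt : APLRel n (∑ i, dtGen i) 0

/-- The polynomial de Rham algebra `(A_PL)_n` on the standard `n`-simplex. -/
abbrev APL (n : ℕ) := RingQuot (APLRel n)

/-- The element `tᵢ ∈ (A_PL)_n`. -/
noncomputable def t {n : ℕ} (i : Fin (n + 1)) : APL n :=
  RingQuot.mkAlgHom ℚ (APLRel n) (tGen i)

/-- The element `dtᵢ ∈ (A_PL)_n`. -/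
noncomputable def dt {n : ℕ} (i : Fin (n + 1)) : APL n :=
  RingQuot.mkAlgHom ℚ (APLRel n) (dtGen i)

/-- The ordered list `[dt_{f(0)}, …, dt_{f(p)}]`. -/
noncomputable def dtList (p n : ℕ) (f : Fin (p + 1) → Fin (n + 1)) : List (APL n) :=
  (List.finRange (p + 1)).map fun j => dt (f j)

/-- The Whitney `p`-form associated to `f : [p] → [n]`:
`ω_f = p! Σᵢ (−1)ⁱ t_{f(i)} · dt_{f(0)} ⋯ (omit dt_{f(i)}) ⋯ dt_{f(p)}`. -/
noncomputable def omega (p n : ℕ) (f : Fin (p + 1) → Fin (n + 1)) : APL n :=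
  (p.factorial : ℚ) • ∑ i : Fin (p + 1),
    ((-1 : ℚ) ^ (i : ℕ)) • (t (f i) * ((dtList p n f).eraseIdx (i : ℕ)).prod)

/-!
STATEMENT 14: The de Rham map evaluates to 1 on the corresponding Whitney form:
for injective monotone `f : [p] → [n]`, `∫_{Δᵖ} f*ω_f = 1`.

Here `F : (A_PL)_n → (A_PL)_p` is the pullback along `f` (the algebra map with
`F tᵢ = Σ_{f(j)=i} tⱼ` and `F dtᵢ = Σ_{f(j)=i} dtⱼ`), and `I` is the
integration map over the standard `p`-simplex, the linear map determined by
`I ((∏ᵢ tᵢ^{aᵢ}) · dt₀ ⋯ (omit dtⱼ) ⋯ dt_p) = (−1)ʲ a₀!⋯a_p!/(a₀+⋯+a_p+p)!`.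
-/

lemma map_eraseIdx' {α β : Type*} :
    ∀ (l : List α) (g : α → β) (i : ℕ), (l.eraseIdx i).map g = (l.map g).eraseIdx i
  | [], _, _ => by simp
  | a :: s, g, 0 => by simp
  | a :: s, g, (i + 1) => by simp [map_eraseIdx' s g i]

lemma list_prod_single {α : Type*} {M : Type*} [Monoid M] :
    ∀ (l : List α) (g : α → M) (i : α), l.Nodup → i ∈ l →
      (∀ j, j ≠ i → g j = 1) → (l.map g).prod = g i := by
  intro l
  induction l with
  | nil => intro g i _ h; simp at h
  | cons a s ih =>
    intro g i hnd hmem hg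
    rcases List.mem_cons.mp hmem with h | h
    · subst h
      have : ∀ x ∈ s.map g, x = 1 := by
        intro x hx
        rcases List.mem_map.mp hx with ⟨j, hj, rfl⟩
        exact hg j (fun e => (List.nodup_cons.mp hnd).1 (e ▸ hj))
      simp [List.prod_eq_one this]
    · have hai : a ≠ i := fun e => (List.nodup_cons.mp hnd).1 (e ▸ h)
      simp [hg a hai, ih g i (List.nodup_cons.mp hnd).2 h hg]

theorem statement14 (p n : ℕ) (f : Fin (p + 1) → Fin (n + 1)) (hf : StrictMono f)
    (F : APL n →ₐ[ℚ] APL p)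
    (hFt : ∀ i, F (t i) = ∑ j : Fin (p + 1), if f j = i then t j else 0)
    (hFdt : ∀ i, F (dt i) = ∑ j : Fin (p + 1), if f j = i then dt j else 0)
    (I : APL p →ₗ[ℚ] ℚ)
    (hI : ∀ (a : Fin (p + 1) → ℕ) (j : Fin (p + 1)),
      I ((((List.finRange (p + 1)).map fun i => t i ^ a i).prod) *
          ((dtList p p (fun j => j)).eraseIdx (j : ℕ)).prod) =
        (-1 : ℚ) ^ (j : ℕ) * ((∏ i, (a i).factorial : ℕ) : ℚ) /
          (((∑ i, a i) + p).factorial : ℕ)) :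
    I (F (omega p n f)) = 1 := by
  have hinj := hf.injective
  have hFt' : ∀ i : Fin (p + 1), F (t (f i)) = t i := by
    intro i
    rw [hFt]
    simp [hinj.eq_iff]
  have hFdt' : ∀ i : Fin (p + 1), F (dt (f i)) = dt i := by
    intro i
    rw [hFdt]
    simp [hinj.eq_iff]
  have hlist : (dtList p n f).map F = dtList p p (fun j => j) := by
    simp [dtList, Function.comp, hFdt']
  have hterm : ∀ i : Fin (p + 1),
      I (F (t (f i) * ((dtList p n f).eraseIdx (i : ℕ)).prod)) =
        (-1 : ℚ) ^ (i : ℕ) / ((1 + p).factorial : ℕ) := by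
    intro i
    have hFprod : F (((dtList p n f).eraseIdx (i : ℕ)).prod) =
        ((dtList p p (fun j => j)).eraseIdx (i : ℕ)).prod := by
      rw [map_list_prod F]
      rw [show ((dtList p n f).eraseIdx (i : ℕ)).map F = ((dtList p n f).map F).eraseIdx (i : ℕ) from map_eraseIdx' _ _ _, hlist]
    have hti : t i = (((List.finRange (p + 1)).map
        fun k => t k ^ (if k = i then 1 else 0)).prod) := by
      rw [list_prod_single (List.finRange (p + 1))
        (fun k => t k ^ (if k = i then 1 else 0)) i (List.nodup_finRange _)
        (List.mem_finRange i) (by intro j hj; simp [hj])]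
      simp
    rw [map_mul, hFt' i, hFprod, hti, hI (fun k => if k = i then 1 else 0) i]
    simp [apply_ite Nat.factorial, Finset.sum_ite_eq']
  have hIF : I (F (omega p n f)) =
      (p.factorial : ℚ) * ∑ i : Fin (p + 1),
        ((-1 : ℚ) ^ (i : ℕ)) * I (F (t (f i) * ((dtList p n f).eraseIdx (i : ℕ)).prod)) := by
    rw [omega, map_smul, map_smul, smul_eq_mul]
    congr 1
    rw [map_sum, map_sum]
    exact Finset.sum_congr rfl fun i _ => by rw [map_smul, map_smul, smul_eq_mul]
  rw [hIF]
  have : ∑ i : Fin (p + 1),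
      ((-1 : ℚ) ^ (i : ℕ)) * I (F (t (f i) * ((dtList p n f).eraseIdx (i : ℕ)).prod)) =
      ∑ i : Fin (p + 1), (1 : ℚ) / ((1 + p).factorial : ℕ) := by
    apply Finset.sum_congr rfl
    intro i _
    rw [hterm i, mul_div_assoc', ← mul_pow]
    simp
  rw [this]
  simp only [Finset.sum_const, Finset.card_univ, Fintype.card_fin, nsmul_eq_mul]
  rw [add_comm 1 p, Nat.factorial_succ]
  push_cast
  have h1 : (p.factorial : ℚ) ≠ 0 := by exact_mod_cast Nat.factorial_ne_zero p
  have h2 : ((p : ℚ) + 1) ≠ 0 := by positivity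
  field_simp
end
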